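/- If 2 diag(c) - W is strictly diagonally dominant (with zero-diagonal W and c_i > 0), then the quadratic game with utilities u_i(x) = b_i x_i + x_i Σ_{j≠i} W i j x_j - c_i x_i² has a unique Nash equilibrium, namely x* = (2 diag(c) - W)⁻¹ b. -/
import Mathlib


open Matrix Finset

lemma quad_max_iff (c m x : ℝ) (hc : 0 < c) :
    (∀ z : ℝ, m * z - c * z ^ 2 ≤ m * x - c * x ^ 2) ↔ 2 * c * x = m := by
  constructor
  · intro h
    have h1 := h (m / (2 * c))
    have e : m * (m / (2 * c)) - c * (m / (2 * c)) ^ 2 = m ^ 2 / (4 * c) := by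
      field_simp; ring
    rw [e, div_le_iff₀ (by positivity : (0:ℝ) < 4 * c)] at h1
    have h2 : (2 * c * x - m) ^ 2 ≤ 0 := by nlinarith
    have h3 : (2 * c * x - m) ^ 2 = 0 := le_antisymm h2 (sq_nonneg _)
    have := (pow_eq_zero_iff two_ne_zero).mp h3
    linarith
  · intro h z
    subst h
    nlinarith [mul_nonneg hc.le (sq_nonneg (z - x))]

/-- If `2 diag(c) - W` is strictly diagonally dominant, the quadratic game
has a unique Nash equilibrium, namely `x* = (2 diag(c) - W)⁻¹ b`. -/
theorem quadratic_game_unique_NE {N : ℕ}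
    (W : Matrix (Fin N) (Fin N) ℝ) (b c : Fin N → ℝ)
    (hWdiag : ∀ i, W i i = 0) (hc : ∀ i, 0 < c i)
    (hsdd : ∀ i, ∑ j ∈ Finset.univ.erase i, |W i j| < 2 * c i)
    (u : Fin N → (Fin N → ℝ) → ℝ)
    (hu : ∀ i x, u i x =
      b i * x i + x i * (∑ j ∈ Finset.univ.erase i, W i j * x j) - c i * (x i) ^ 2) :
    (∃! xs : Fin N → ℝ, ∀ i, ∀ z : ℝ, u i (Function.update xs i z) ≤ u i xs) ∧
    (∀ i, ∀ z : ℝ,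
      u i (Function.update (((2 : ℝ) • Matrix.diagonal c - W)⁻¹.mulVec b) i z) ≤
        u i (((2 : ℝ) • Matrix.diagonal c - W)⁻¹.mulVec b)) := by
  set A : Matrix (Fin N) (Fin N) ℝ := (2 : ℝ) • Matrix.diagonal c - W with hA
  have hAij : ∀ i j, A i j = 2 * (if i = j then c i else 0) - W i j := by
    intro i j
    simp [hA, Matrix.diagonal, Matrix.sub_apply, Matrix.smul_apply]
  -- determinant nonzero by strict diagonal dominance
  have hdet : A.det ≠ 0 := by
    apply det_ne_zero_of_sum_row_lt_diag
    intro k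
    have e1 : ∀ j ∈ Finset.univ.erase k, ‖A k j‖ = |W k j| := by
      intro j hj
      have : k ≠ j := (Finset.ne_of_mem_erase hj).symm
      simp [hAij, this, Real.norm_eq_abs, abs_neg]
    rw [Finset.sum_congr rfl e1]
    have e2 : ‖A k k‖ = 2 * c k := by
      have : A k k = 2 * c k := by simp [hAij, hWdiag k]
      rw [this, Real.norm_eq_abs, abs_of_pos (by linarith [hc k])]
    rw [e2]; exact hsdd k
  have hUnit : IsUnit A.det := isUnit_iff_ne_zero.mpr hdet
  -- mulVec computation
  have hmul : ∀ (x : Fin N → ℝ) i,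
      A.mulVec x i = 2 * c i * x i - ∑ j ∈ Finset.univ.erase i, W i j * x j := by
    intro x i
    have h0 : A.mulVec x i = ∑ j, (2 * (if i = j then c i else 0) - W i j) * x j := by
      simp [Matrix.mulVec, dotProduct, hAij]
    have e1 : ∀ j ∈ (Finset.univ : Finset (Fin N)),
        (2 * (if i = j then c i else 0) - W i j) * x j
          = (if i = j then 2 * c i * x j else 0) - W i j * x j := by
      intro j _; split <;> ring
    rw [h0, Finset.sum_congr rfl e1, Finset.sum_sub_distrib]
    congr 1
    · simp
    · rw [← Finset.add_sum_erase _ _ (Finset.mem_univ i), hWdiag i, zero_mul, zero_add]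
  -- NE characterization
  have key : ∀ x : Fin N → ℝ,
      (∀ i, ∀ z : ℝ, u i (Function.update x i z) ≤ u i x) ↔ A.mulVec x = b := by
    intro x
    have hS : ∀ i (z : ℝ), u i (Function.update x i z) =
        (b i + ∑ j ∈ Finset.univ.erase i, W i j * x j) * z - c i * z ^ 2 := by
      intro i z
      rw [hu]
      have : ∀ j ∈ Finset.univ.erase i, W i j * Function.update x i z j = W i j * x j := by
        intro j hj
        rw [Function.update_of_ne (Finset.ne_of_mem_erase hj)]
      rw [Finset.sum_congr rfl this, Function.update_self]
      ring
    have hui : ∀ i, u i x =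
        (b i + ∑ j ∈ Finset.univ.erase i, W i j * x j) * x i - c i * (x i) ^ 2 := by
      intro i; rw [hu]; ring
    constructor
    · intro h
      funext i
      have h' : ∀ z : ℝ, (b i + ∑ j ∈ Finset.univ.erase i, W i j * x j) * z - c i * z ^ 2 ≤
          (b i + ∑ j ∈ Finset.univ.erase i, W i j * x j) * x i - c i * (x i) ^ 2 := by
        intro z; rw [← hS, ← hui]; exact h i z
      have := (quad_max_iff (c i) _ (x i) (hc i)).mp h'
      rw [hmul]; linarith
    · intro h i z
      rw [hS, hui]
      have hi : A.mulVec x i = b i := by rw [h]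
      rw [hmul] at hi
      exact (quad_max_iff (c i) _ (x i) (hc i)).mpr (by linarith) z
  -- the equilibrium
  set xs : Fin N → ℝ := A⁻¹.mulVec b with hxs
  have hxsNE : A.mulVec xs = b := by
    rw [hxs, Matrix.mulVec_mulVec, Matrix.mul_nonsing_inv A hUnit, Matrix.one_mulVec]
  have hNE := (key xs).mpr hxsNE
  refine ⟨⟨xs, hNE, ?_⟩, hNE⟩
  intro y hy
  have hyb : A.mulVec y = b := (key y).mp hy
  calc y = A⁻¹.mulVec (A.mulVec y) := by
            rw [Matrix.mulVec_mulVec, Matrix.nonsing_inv_mul A hUnit, Matrix.one_mulVec]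
       _ = xs := by rw [hyb]
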